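/- Let h : [0,∞) → ℝ be measurable with ∫₀^∞ h(x) dx = 0, ∫₀^∞ |x·h(x)| dx < ∞ and ∫₀^∞ h(x)²·e^{x} dx < ∞, and define h₀(x) = h(x) − (x − 1)·e^{−x}·∫₀^∞ s·h(s) ds. Then ∫₀^∞ h₀(x)²·e^{x} dx = ∫₀^∞ h(x)²·e^{x} dx − (∫₀^∞ x·h(x) dx)², and ∫₀^∞ ψ(x)·h₀(x) dx = ∫₀^∞ ψ(x)·h(x) dx, where ψ(s) = −1/20 + (2/5)e^{−3s} − (9/10)e^{−2s} + (1/2)e^{−s}. -/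
import Mathlib


open Real MeasureTheory Set Filter Asymptotics

/-- The projection `ψ` from the paper. -/
noncomputable def psi (s : ℝ) : ℝ :=
  -1/20 + (2/5) * exp (-(3*s)) - (9/10) * exp (-(2*s)) + (1/2) * exp (-s)

lemma aux_int (n : ℕ) {r : ℝ} (hr : 0 < r) :
    IntegrableOn (fun x : ℝ => x ^ n * exp (-(r * x))) (Ioi 0) := by
  refine integrable_of_isBigO_exp_neg (half_pos hr) ?_ ?_
  · apply Continuous.continuousOn
    continuity
  have h1 : Tendsto (fun x : ℝ => x ^ (n : ℝ) * exp (-(r/2) * x)) atTop (nhds 0) :=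
    tendsto_rpow_mul_exp_neg_mul_atTop_nhds_zero n (r/2) (half_pos hr)
  simp only [Real.rpow_natCast] at h1
  have heq : (fun x : ℝ => x ^ n * exp (-(r * x)))
      = fun x => (x ^ n * exp (-(r/2) * x)) * exp (-(r/2) * x) := by
    funext x
    rw [mul_assoc, ← Real.exp_add]
    ring_nf
  rw [heq]
  simpa using (h1.isBigO_one ℝ).mul (isBigO_refl (fun x : ℝ => exp (-(r/2) * x)) atTop)

lemma aux_val (n : ℕ) {r : ℝ} (hr : 0 < r) :
    ∫ x in Ioi (0:ℝ), x ^ n * exp (-(r * x)) = (Nat.factorial n : ℝ) / r ^ (n + 1) := by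
  have h := Real.integral_rpow_mul_exp_neg_mul_Ioi (a := (n : ℝ) + 1) (by positivity) hr
  rw [show (n : ℝ) + 1 - 1 = (n : ℝ) by ring] at h
  have heq : ∫ x in Ioi (0:ℝ), x ^ n * exp (-(r * x))
      = ∫ x in Ioi (0:ℝ), x ^ ((n : ℝ)) * exp (-(r * x)) :=
    setIntegral_congr_fun measurableSet_Ioi (fun t _ => by rw [Real.rpow_natCast])
  rw [heq, h, Real.Gamma_nat_eq_factorial n,
    show ((n : ℝ) + 1) = ((n + 1 : ℕ) : ℝ) by push_cast; ring, Real.rpow_natCast,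
    div_pow, one_pow]
  field_simp

lemma aux_int1 {r : ℝ} (hr : 0 < r) :
    IntegrableOn (fun x : ℝ => (x - 1) * exp (-(r * x))) (Ioi 0) := by
  have H : IntegrableOn (fun x : ℝ => x ^ 1 * exp (-(r*x)) - x ^ 0 * exp (-(r*x))) (Ioi 0) :=
    (aux_int 1 hr).sub (aux_int 0 hr)
  exact H.congr_fun (fun x _ => by ring) measurableSet_Ioi

lemma aux_val1 {r : ℝ} (hr : 0 < r) :
    ∫ x in Ioi (0:ℝ), (x - 1) * exp (-(r * x)) = 1 / r ^ 2 - 1 / r := by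
  rw [setIntegral_congr_fun measurableSet_Ioi
      (fun x _ => (by ring : (x - 1) * exp (-(r * x)) = x ^ 1 * exp (-(r*x)) - x ^ 0 * exp (-(r*x)))),
    integral_sub (aux_int 1 hr) (aux_int 0 hr), aux_val 1 hr, aux_val 0 hr]
  norm_num [Nat.factorial]

/-- Properties of the auxiliary function `h₀(x) = h(x) − (x−1)e^{−x}·∫₀^∞ s·h(s) ds`. -/
theorem stmt_15 (h : ℝ → ℝ) (hmeas : Measurable h)
    (hint : IntegrableOn h (Ioi 0))
    (hzero : (∫ x in Ioi (0:ℝ), h x) = 0)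
    (hxh : IntegrableOn (fun x => x * h x) (Ioi 0))
    (hh2 : IntegrableOn (fun x => (h x)^2 * exp x) (Ioi 0))
    (h₀ : ℝ → ℝ)
    (h₀def : ∀ x, h₀ x = h x - (x - 1) * exp (-x) * (∫ s in Ioi (0:ℝ), s * h s)) :
    (∫ x in Ioi (0:ℝ), (h₀ x)^2 * exp x) =
      (∫ x in Ioi (0:ℝ), (h x)^2 * exp x) - (∫ x in Ioi (0:ℝ), x * h x)^2 ∧
    (∫ x in Ioi (0:ℝ), psi x * h₀ x) = (∫ x in Ioi (0:ℝ), psi x * h x) := by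
  set c : ℝ := ∫ x in Ioi (0:ℝ), x * h x with hc
  have IB0 : IntegrableOn (fun x : ℝ => x * h x - h x) (Ioi 0) := hxh.sub hint
  have IB : IntegrableOn (fun x : ℝ => (x - 1) * h x) (Ioi 0) :=
    IB0.congr_fun (fun x _ => by ring) measurableSet_Ioi
  have vB : ∫ x in Ioi (0:ℝ), (x - 1) * h x = c := by
    rw [setIntegral_congr_fun measurableSet_Ioi
        (fun x _ => (by ring : (x - 1) * h x = x * h x - h x)),
      integral_sub hxh hint, hzero, sub_zero]
  have IC0 : IntegrableOn
      (fun x : ℝ => x ^ 2 * exp (-(1*x)) - 2 * (x ^ 1 * exp (-(1*x)))) (Ioi 0) :=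
    (aux_int 2 one_pos).sub ((aux_int 1 one_pos).const_mul 2)
  have IC1 : IntegrableOn
      (fun x : ℝ => (x ^ 2 * exp (-(1*x)) - 2 * (x ^ 1 * exp (-(1*x)))) + x ^ 0 * exp (-(1*x)))
      (Ioi 0) := IC0.add (aux_int 0 one_pos)
  have IC : IntegrableOn (fun x : ℝ => (x - 1) ^ 2 * exp (-x)) (Ioi 0) :=
    IC1.congr_fun (fun x _ => by simp only [one_mul]; ring) measurableSet_Ioi
  have vC : ∫ x in Ioi (0:ℝ), (x - 1) ^ 2 * exp (-x) = 1 := by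
    rw [setIntegral_congr_fun measurableSet_Ioi
        (fun x _ => (by simp only [one_mul]; ring :
          (x - 1) ^ 2 * exp (-x) = (x ^ 2 * exp (-(1*x)) - 2 * (x ^ 1 * exp (-(1*x))))
            + x ^ 0 * exp (-(1*x)))),
      integral_add IC0 (aux_int 0 one_pos),
      integral_sub (aux_int 2 one_pos) ((aux_int 1 one_pos).const_mul 2),
      integral_const_mul, aux_val 2 one_pos, aux_val 1 one_pos, aux_val 0 one_pos]
    norm_num [Nat.factorial]
  constructor
  · -- first identity
    have key1 : ∀ x : ℝ, (h₀ x) ^ 2 * exp x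
        = ((h x) ^ 2 * exp x - (2 * c) * ((x - 1) * h x)) + c ^ 2 * ((x - 1) ^ 2 * exp (-x)) := by
      intro x
      have e1 : exp (-x) * exp x = 1 := by rw [← Real.exp_add]; simp
      rw [h₀def]
      linear_combination (c ^ 2 * (x - 1) ^ 2 * exp (-x) - 2 * c * (x - 1) * h x) * e1
    have I1 : IntegrableOn
        (fun x : ℝ => (h x) ^ 2 * exp x - (2 * c) * ((x - 1) * h x)) (Ioi 0) :=
      hh2.sub (IB.const_mul (2 * c))
    rw [setIntegral_congr_fun measurableSet_Ioi (fun x _ => key1 x),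
      integral_add I1 (IC.const_mul (c ^ 2)),
      integral_sub hh2 (IB.const_mul (2 * c)), integral_const_mul, integral_const_mul, vB, vC]
    ring
  · -- second identity
    have key : ∀ x : ℝ, psi x * ((x - 1) * exp (-x))
        = (((-1/20) * ((x - 1) * exp (-(1*x))) + (2/5) * ((x - 1) * exp (-(4*x))))
          + (-(9/10)) * ((x - 1) * exp (-(3*x)))) + (1/2) * ((x - 1) * exp (-(2*x))) := by
      intro x
      have h1 : exp (-(3*x)) * exp (-x) = exp (-(4*x)) := by rw [← Real.exp_add]; ring_nf
      have h2 : exp (-(2*x)) * exp (-x) = exp (-(3*x)) := by rw [← Real.exp_add]; ring_nf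
      have h3 : exp (-x) * exp (-x) = exp (-(2*x)) := by rw [← Real.exp_add]; ring_nf
      have h4 : exp (-(1*x)) = exp (-x) := by norm_num
      simp only [psi, h4]
      linear_combination ((2/5) * (x-1)) * h1 + (-(9/10) * (x-1)) * h2 + ((1/2) * (x-1)) * h3
    have J1 : IntegrableOn (fun x : ℝ =>
        (-1/20) * ((x - 1) * exp (-(1*x))) + (2/5) * ((x - 1) * exp (-(4*x)))) (Ioi 0) :=
      ((aux_int1 one_pos).const_mul (-1/20)).add
        ((aux_int1 (by norm_num : (0:ℝ) < 4)).const_mul (2/5))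
    have J2 : IntegrableOn (fun x : ℝ =>
        ((-1/20) * ((x - 1) * exp (-(1*x))) + (2/5) * ((x - 1) * exp (-(4*x))))
          + (-(9/10)) * ((x - 1) * exp (-(3*x)))) (Ioi 0) :=
      J1.add ((aux_int1 (by norm_num : (0:ℝ) < 3)).const_mul (-(9/10)))
    have J3 : IntegrableOn (fun x : ℝ =>
        (((-1/20) * ((x - 1) * exp (-(1*x))) + (2/5) * ((x - 1) * exp (-(4*x))))
          + (-(9/10)) * ((x - 1) * exp (-(3*x)))) + (1/2) * ((x - 1) * exp (-(2*x)))) (Ioi 0) :=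
      J2.add ((aux_int1 (by norm_num : (0:ℝ) < 2)).const_mul (1/2))
    have Ig : IntegrableOn (fun x : ℝ => psi x * ((x - 1) * exp (-x))) (Ioi 0) :=
      J3.congr_fun (fun x _ => (key x).symm) measurableSet_Ioi
    have vg : ∫ x in Ioi (0:ℝ), psi x * ((x - 1) * exp (-x)) = 0 := by
      rw [setIntegral_congr_fun measurableSet_Ioi (fun x _ => key x),
        integral_add J2 ((aux_int1 (by norm_num : (0:ℝ) < 2)).const_mul (1/2)),
        integral_add J1 ((aux_int1 (by norm_num : (0:ℝ) < 3)).const_mul (-(9/10))),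
        integral_add ((aux_int1 one_pos).const_mul (-1/20))
          ((aux_int1 (by norm_num : (0:ℝ) < 4)).const_mul (2/5)),
        integral_const_mul, integral_const_mul, integral_const_mul, integral_const_mul,
        aux_val1 one_pos, aux_val1 (by norm_num : (0:ℝ) < 4),
        aux_val1 (by norm_num : (0:ℝ) < 3), aux_val1 (by norm_num : (0:ℝ) < 2)]
      norm_num
    have hpsi_cont : Continuous psi := by
      unfold psi
      fun_prop
    have Iph : IntegrableOn (fun x : ℝ => psi x * h x) (Ioi 0) := by
      refine Integrable.mono' (hint.norm.const_mul 2)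
        ((hpsi_cont.measurable.mul hmeas).aestronglyMeasurable) ?_
      filter_upwards [ae_restrict_mem measurableSet_Ioi] with x hx
      have hx0 : (0:ℝ) < x := hx
      have b1 : exp (-(3*x)) ≤ 1 := exp_le_one_iff.mpr (by linarith)
      have b2 : exp (-(2*x)) ≤ 1 := exp_le_one_iff.mpr (by linarith)
      have b3 : exp (-x) ≤ 1 := exp_le_one_iff.mpr (by linarith)
      have p1 : (0:ℝ) < exp (-(3*x)) := exp_pos _
      have p2 : (0:ℝ) < exp (-(2*x)) := exp_pos _
      have p3 : (0:ℝ) < exp (-x) := exp_pos _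
      have hb : |psi x| ≤ 2 := by
        rw [abs_le]
        unfold psi
        constructor <;> linarith
      rw [norm_mul]
      exact mul_le_mul_of_nonneg_right (by simpa using hb) (norm_nonneg _)
    have key2 : ∀ x : ℝ, psi x * h₀ x
        = psi x * h x - c * (psi x * ((x - 1) * exp (-x))) := by
      intro x
      rw [h₀def]
      ring
    rw [setIntegral_congr_fun measurableSet_Ioi (fun x _ => key2 x),
      integral_sub Iph (Ig.const_mul c), integral_const_mul, vg, mul_zero, sub_zero]
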